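/- For a single task with two machines and bimodal execution time, any starting time t2 ∈ (0, α1) for the second machine is dominated: the point (E[C([0,t2])], E[T([0,t2])]) lies on the line segment between those of [0,0] and [0,α1], since both E[T] and E[C] are affine functions of t2 on [0, α1] (assuming α1 + t2 < α2 throughout this interval, i.e., 2α1 < α2). -/
import Mathlib


/-- Expectation over the four atoms of (X1, X2), i.i.d. bimodal
(α1 w.p. p1, α2 w.p. p2). -/
def Ebim (p1 p2 α1 α2 : ℝ) (g : ℝ → ℝ → ℝ) : ℝ :=
  p1 * p1 * g α1 α1 + p1 * p2 * g α1 α2 + p2 * p1 * g α2 α1 + p2 * p2 * g α2 α2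

/-- Any t2 ∈ (0, α1) is dominated: with 2α1 < α2, both E[T] and E[C] are
affine in t2 on [0, α1], so the point (E[C([0,t2])], E[T([0,t2])]) lies on the
segment between the points of [0,0] and [0,α1]. -/
theorem stmt_10 (α1 α2 p1 p2 : ℝ)
    (hα1 : 0 < α1) (hα : 2 * α1 < α2)
    (hp1 : 0 < p1) (hp1' : p1 < 1) (hp2 : p2 = 1 - p1) :
    ∀ t2 : ℝ, 0 < t2 → t2 < α1 →
      ∃ θ : ℝ, 0 ≤ θ ∧ θ ≤ 1 ∧
        Ebim p1 p2 α1 α2 (fun x1 x2 => min x1 (t2 + x2))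
          = (1 - θ) * Ebim p1 p2 α1 α2 (fun x1 x2 => min x1 (0 + x2))
            + θ * Ebim p1 p2 α1 α2 (fun x1 x2 => min x1 (α1 + x2)) ∧
        Ebim p1 p2 α1 α2
            (fun x1 x2 => min x1 (t2 + x2) + max (min x1 (t2 + x2) - t2) 0)
          = (1 - θ) * Ebim p1 p2 α1 α2
                (fun x1 x2 => min x1 (0 + x2) + max (min x1 (0 + x2) - 0) 0)
            + θ * Ebim p1 p2 α1 α2
                (fun x1 x2 => min x1 (α1 + x2) + max (min x1 (α1 + x2) - α1) 0) := by
  intro t2 ht0 ht1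
  refine ⟨t2 / α1, by positivity, by
    rw [div_le_one hα1]; linarith, ?_, ?_⟩ <;>
  · simp only [Ebim]
    have h1 : min α1 (t2 + α1) = α1 := min_eq_left (by linarith)
    have h2 : min α1 (t2 + α2) = α1 := min_eq_left (by linarith)
    have h3 : min α2 (t2 + α1) = t2 + α1 := min_eq_right (by linarith)
    have h4 : min α2 (t2 + α2) = α2 := min_eq_left (by linarith)
    have h5 : min α1 (0 + α1) = α1 := min_eq_left (by linarith)
    have h6 : min α1 (0 + α2) = α1 := min_eq_left (by linarith)
    have h7 : min α2 (0 + α1) = α1 := by rw [min_eq_right (by linarith : (0:ℝ) + α1 ≤ α2)]; ring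
    have h8 : min α2 (0 + α2) = α2 := min_eq_left (by linarith)
    have h9 : min α1 (α1 + α1) = α1 := min_eq_left (by linarith)
    have h10 : min α1 (α1 + α2) = α1 := min_eq_left (by linarith)
    have h11 : min α2 (α1 + α1) = α1 + α1 := min_eq_right (by linarith)
    have h12 : min α2 (α1 + α2) = α2 := min_eq_left (by linarith)
    simp only [h1, h2, h3, h4, h5, h6, h7, h8, h9, h10, h11, h12]
    have m1 : max (α1 - t2) 0 = α1 - t2 := max_eq_left (by linarith)
    have m2 : max (t2 + α1 - t2) 0 = t2 + α1 - t2 := max_eq_left (by linarith)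
    have m3 : max (α2 - t2) 0 = α2 - t2 := max_eq_left (by linarith)
    have m4 : max (α1 - 0) 0 = α1 - 0 := max_eq_left (by linarith)
    have m5 : max (α2 - 0) 0 = α2 - 0 := max_eq_left (by linarith)
    have m6 : max (α1 - α1) 0 = α1 - α1 := max_eq_left (by linarith)
    have m7 : max (α1 + α1 - α1) 0 = α1 + α1 - α1 := max_eq_left (by linarith)
    have m8 : max (α2 - α1) 0 = α2 - α1 := max_eq_left (by linarith)
    try simp only [m1, m2, m3, m4, m5, m6, m7, m8]
    subst hp2
    field_simp
    ring
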